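/- For every integer n ≥ 3, the 2-colour Ramsey number satisfies R_2(n+1) ≥ R_2(n) + n. -/

import Mathlib

open SimpleGraph
open Finset

/-- The vertex-disjoint union `K_n + K_m` of two complete graphs. -/
def cliqueSum (n m : ℕ) : SimpleGraph (Fin n ⊕ Fin m) :=
  SimpleGraph.fromRel fun x y =>
    (∃ a b, x = Sum.inl a ∧ y = Sum.inl b) ∨ (∃ a b, x = Sum.inr a ∧ y = Sum.inr b)

/-- There is a copy of `H` in `G` that is monochromatic in colour `i`
under the edge-colouring `c`. -/
def MonoCopy {V W : Type*} {r : ℕ} (G : SimpleGraph V) (H : SimpleGraph W)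
    (c : Sym2 V → Fin r) (i : Fin r) : Prop :=
  ∃ f : H →g G, Function.Injective f ∧ ∀ u v, H.Adj u v → c s(f u, f v) = i

/-- `G` is `r`-Ramsey for `H`: every `r`-colouring of the edges of `G`
admits a monochromatic copy of `H`. -/
def IsRamseyFor {V W : Type*} (r : ℕ) (G : SimpleGraph V) (H : SimpleGraph W) : Prop :=
  ∀ c : Sym2 V → Fin r, ∃ i : Fin r, MonoCopy G H c i

/-- `G₁` and `G₂` are `r`-Ramsey equivalent. -/
def RamseyEquiv {V W : Type*} (r : ℕ) (G₁ : SimpleGraph V) (G₂ : SimpleGraph W) : Prop :=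
  ∀ {U : Type*} (G : SimpleGraph U), IsRamseyFor r G G₁ ↔ IsRamseyFor r G G₂

/-- `N` has the Ramsey property for clique sizes `n : Fin r → ℕ`: every `r`-colouring of
the edges of `K_N` admits a colour `i` and an `i`-monochromatic clique of size `n i`. -/
def HasRamseyProp (N : ℕ) {r : ℕ} (n : Fin r → ℕ) : Prop :=
  ∀ c : Sym2 (Fin N) → Fin r, ∃ i : Fin r, ∃ s : Finset (Fin N),
    s.card = n i ∧ ∀ u ∈ s, ∀ v ∈ s, u ≠ v → c s(u, v) = i

/-- The Ramsey number `R_r(n 0, …, n (r-1))`. -/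
noncomputable def ramseyNumber {r : ℕ} (n : Fin r → ℕ) : ℕ :=
  sInf {N | HasRamseyProp N n}

/-- For `n ≥ 3`, the 2-colour Ramsey number satisfies
`R_2(n+1) ≥ R_2(n) + n`. -/


lemma fin2cases (i : Fin 2) : i = 0 ∨ i = 1 := by fin_cases i <;> simp

lemma ramsey_exists : ∀ a b : ℕ, ∃ N : ℕ, ∀ (V : Type) [DecidableEq V]
    (c : Sym2 V → Fin 2) (s : Finset V), N ≤ s.card →
    (∃ t ⊆ s, t.card = a ∧ ∀ u ∈ t, ∀ v ∈ t, u ≠ v → c s(u, v) = 0) ∨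
    (∃ t ⊆ s, t.card = b ∧ ∀ u ∈ t, ∀ v ∈ t, u ≠ v → c s(u, v) = 1) := by
  intro a
  induction a with
  | zero =>
    intro b
    exact ⟨0, fun V _ c s _ => Or.inl ⟨∅, empty_subset _, card_empty, by simp⟩⟩
  | succ a ih =>
    intro b
    induction b with
    | zero =>
      exact ⟨0, fun V _ c s _ => Or.inr ⟨∅, empty_subset _, card_empty, by simp⟩⟩
    | succ b ihb =>
      obtain ⟨Na, hNa⟩ := ih (b + 1)
      obtain ⟨Nb, hNb⟩ := ihb
      refine ⟨Na + Nb + 1, fun V _ c s hs => ?_⟩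
      have hsne : s.Nonempty := card_pos.mp (by omega)
      obtain ⟨v, hv⟩ := hsne
      set s' := s.erase v with hs'
      have hcard' : Na + Nb ≤ s'.card := by
        rw [hs', Finset.card_erase_of_mem hv]; omega
      set A := s'.filter (fun u => c s(v, u) = 0) with hA
      set B := s'.filter (fun u => ¬ c s(v, u) = 0) with hB
      have hAB : A.card + B.card = s'.card :=
        Finset.card_filter_add_card_filter_not _
      have hsplit : Na ≤ A.card ∨ Nb ≤ B.card := by omega
      rcases hsplit with h | h
      · rcases hNa V c A h with ⟨t, hts, htc, htm⟩ | ⟨t, hts, htc, htm⟩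
        · -- red clique of size a in A; add v
          have hvt : v ∉ t := fun hvt => (Finset.notMem_erase v s)
            (Finset.mem_of_mem_filter v (hts hvt))
          refine Or.inl ⟨insert v t, ?_, ?_, ?_⟩
          · intro x hx
            rcases Finset.mem_insert.mp hx with rfl | hx
            · exact hv
            · exact Finset.erase_subset v s (Finset.mem_of_mem_filter x (hts hx))
          · rw [Finset.card_insert_of_notMem hvt, htc]
          · intro x hx y hy hxy
            rcases Finset.mem_insert.mp hx with hxv | hxt
            · rcases Finset.mem_insert.mp hy with hyv | hyt
              · exact absurd (hxv.trans hyv.symm) hxy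
              · rw [hxv]; exact (Finset.mem_filter.mp (hts hyt)).2
            · rcases Finset.mem_insert.mp hy with hyv | hyt
              · rw [hyv]
                have := (Finset.mem_filter.mp (hts hxt)).2
                rwa [Sym2.eq_swap] at this
              · exact htm x hxt y hyt hxy
        · exact Or.inr ⟨t, hts.trans ((Finset.filter_subset _ _).trans
            (Finset.erase_subset v s)), htc, htm⟩
      · rcases hNb V c B h with ⟨t, hts, htc, htm⟩ | ⟨t, hts, htc, htm⟩
        · exact Or.inl ⟨t, hts.trans ((Finset.filter_subset _ _).trans
            (Finset.erase_subset v s)), htc, htm⟩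
        · -- blue clique of size b in B; add v
          have hvt : v ∉ t := fun hvt => (Finset.notMem_erase v s)
            (Finset.mem_of_mem_filter v (hts hvt))
          refine Or.inr ⟨insert v t, ?_, ?_, ?_⟩
          · intro x hx
            rcases Finset.mem_insert.mp hx with rfl | hx
            · exact hv
            · exact Finset.erase_subset v s (Finset.mem_of_mem_filter x (hts hx))
          · rw [Finset.card_insert_of_notMem hvt, htc]
          · intro x hx y hy hxy
            rcases Finset.mem_insert.mp hx with hxv | hxt
            · rcases Finset.mem_insert.mp hy with hyv | hyt
              · exact absurd (hxv.trans hyv.symm) hxy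
              · rw [hxv]
                have := (Finset.mem_filter.mp (hts hyt)).2
                rcases fin2cases (c s(v, y)) with h0 | h1
                · exact absurd h0 this
                · exact h1
            · rcases Finset.mem_insert.mp hy with hyv | hyt
              · rw [hyv]
                have := (Finset.mem_filter.mp (hts hxt)).2
                rcases fin2cases (c s(v, x)) with h0 | h1
                · exact absurd h0 this
                · rwa [Sym2.eq_swap] at h1
              · exact htm x hxt y hyt hxy


/-- Extend a colouring of `K_m` to `K_{m+n}`: new-new edges blue, old-new edges red. -/
def extCol (m n : ℕ) (c0 : Sym2 (Fin m) → Fin 2) : Sym2 (Fin m ⊕ Fin n) → Fin 2 :=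
  Sym2.lift ⟨fun x y => match x, y with
    | Sum.inl a, Sum.inl b => c0 s(a, b)
    | Sum.inr _, Sum.inr _ => 1
    | _, _ => 0,
    by
      rintro (a | a) (b | b)
      · show c0 s(a, b) = c0 s(b, a); rw [Sym2.eq_swap]
      · rfl
      · rfl
      · rfl⟩

lemma extCol_no_mono {m n : ℕ} (c0 : Sym2 (Fin m) → Fin 2)
    (h : ∀ (i : Fin 2) (s : Finset (Fin m)), s.card = n →
      ¬ ∀ u ∈ s, ∀ v ∈ s, u ≠ v → c0 s(u, v) = i) :
    ∀ (i : Fin 2) (t : Finset (Fin m ⊕ Fin n)), t.card = n + 1 →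
      ¬ ∀ u ∈ t, ∀ v ∈ t, u ≠ v → extCol m n c0 s(u, v) = i := by
  classical
  intro i t htc hmono
  set s1 := t.preimage Sum.inl Sum.inl_injective.injOn with hs1
  set sr := t.preimage Sum.inr Sum.inr_injective.injOn with hsr
  have hmem1 : ∀ a, a ∈ s1 ↔ Sum.inl a ∈ t := fun a => Finset.mem_preimage
  have hmemr : ∀ b, b ∈ sr ↔ Sum.inr b ∈ t := fun b => Finset.mem_preimage
  have hsub : t ⊆ s1.image Sum.inl ∪ sr.image Sum.inr := by
    intro x hx
    rcases x with a | b
    · exact Finset.mem_union_left _ (Finset.mem_image_of_mem _ ((hmem1 a).mpr hx))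
    · exact Finset.mem_union_right _ (Finset.mem_image_of_mem _ ((hmemr b).mpr hx))
  have hcards : t.card ≤ s1.card + sr.card :=
    (Finset.card_le_card hsub).trans ((Finset.card_union_le _ _).trans
      (Nat.add_le_add Finset.card_image_le Finset.card_image_le))
  have hclique : ∀ s2 : Finset (Fin m), s2 ⊆ s1 → s2.card = n → False := by
    intro s2 hsub2 hs2c
    refine h i s2 hs2c ?_
    intro u hu v hv huv
    have h1 : Sum.inl u ∈ t := (hmem1 u).mp (hsub2 hu)
    have h2 : Sum.inl v ∈ t := (hmem1 v).mp (hsub2 hv)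
    exact hmono _ h1 _ h2 (by simpa using huv)
  rcases fin2cases i with rfl | rfl
  · -- i = 0 : at most one new vertex in the clique
    have hsr1 : sr.card ≤ 1 := by
      refine Finset.card_le_one.mpr ?_
      intro a ha b hb
      by_contra hab
      have h1 := hmono _ ((hmemr a).mp ha) _ ((hmemr b).mp hb) (fun hc => hab (Sum.inr_injective hc))
      have h01 : (1 : Fin 2) = 0 := h1
      exact absurd h01 (by decide)
    have hle : n ≤ s1.card := by omega
    obtain ⟨s2, hsub2, hs2c⟩ := Finset.exists_subset_card_eq hle
    exact hclique s2 hsub2 hs2c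
  · -- i = 1
    rcases Finset.eq_empty_or_nonempty sr with he | ⟨b, hb⟩
    · have hsr0 : sr.card = 0 := by rw [he]; rfl
      obtain ⟨s2, hsub2, hs2c⟩ := Finset.exists_subset_card_eq (s := s1) (n := n) (by omega)
      exact hclique s2 hsub2 hs2c
    · rcases Finset.eq_empty_or_nonempty s1 with he1 | ⟨a, ha⟩
      · have h10 : s1.card = 0 := by rw [he1]; rfl
        have hrn : sr.card ≤ n := (Finset.card_le_univ sr).trans_eq (by simp)
        omega
      · have hne : (Sum.inl a : Fin m ⊕ Fin n) ≠ Sum.inr b := by simp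
        have h1 := hmono _ ((hmem1 a).mp ha) _ ((hmemr b).mp hb) hne
        have h01 : (0 : Fin 2) = 1 := h1
        exact absurd h01 (by decide)

lemma exists_hasRamseyProp (m : ℕ) : ∃ N, HasRamseyProp N (fun _ : Fin 2 => m) := by
  obtain ⟨N, hN⟩ := ramsey_exists m m
  refine ⟨N, fun c => ?_⟩
  rcases hN (Fin N) c Finset.univ (by simp) with ⟨t, -, ht, hm⟩ | ⟨t, -, ht, hm⟩
  · exact ⟨0, t, ht, hm⟩
  · exact ⟨1, t, ht, hm⟩

/-- For `n ≥ 3`, the 2-colour Ramsey number satisfies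
`R_2(n+1) ≥ R_2(n) + n`. -/
theorem stmt_6 (n : ℕ) (hn : 3 ≤ n) :
    ramseyNumber (fun _ : Fin 2 => n) + n ≤ ramseyNumber (fun _ : Fin 2 => n + 1) := by
  classical
  obtain ⟨N0, hN0⟩ := exists_hasRamseyProp (n + 1)
  set R := ramseyNumber (fun _ : Fin 2 => n) with hR
  have hRdef : R = sInf {N | HasRamseyProp N (fun _ : Fin 2 => n)} := hR
  have hSnN0 : HasRamseyProp N0 (fun _ : Fin 2 => n) := by
    intro c
    obtain ⟨i, s, hs, hm⟩ := hN0 c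
    have hs' : s.card = n + 1 := hs
    obtain ⟨t, hts, htc⟩ := Finset.exists_subset_card_eq (show n ≤ s.card by omega)
    exact ⟨i, t, htc, fun u hu v hv huv => hm u (hts hu) v (hts hv) huv⟩
  have h0 : ¬ HasRamseyProp 0 (fun _ : Fin 2 => n) := by
    intro h
    obtain ⟨i, s, hs, -⟩ := h (fun _ => 0)
    have hs' : s.card = n := hs
    have hle := Finset.card_le_univ s
    simp only [Finset.card_univ, Fintype.card_fin] at hle
    omega
  have hRpos : 1 ≤ R := by
    by_contra hc
    have hR0 : sInf {N | HasRamseyProp N (fun _ : Fin 2 => n)} = 0 := by omega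
    rcases Nat.sInf_eq_zero.mp hR0 with h | h
    · exact h0 h
    · exact absurd h (Set.nonempty_iff_ne_empty.mp ⟨N0, hSnN0⟩)
  have hbad : ¬ HasRamseyProp (R - 1) (fun _ : Fin 2 => n) :=
    Nat.notMem_of_lt_sInf (show R - 1 < sInf {N | HasRamseyProp N (fun _ : Fin 2 => n)} by
      omega)
  obtain ⟨c0, hc0⟩ := not_forall.mp hbad
  have hc0' : ∀ (i : Fin 2) (s : Finset (Fin (R - 1))), s.card = n →
      ¬ ∀ u ∈ s, ∀ v ∈ s, u ≠ v → c0 s(u, v) = i :=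
    fun i s hcard hm => hc0 ⟨i, s, hcard, hm⟩
  show R + n ≤ sInf {N | HasRamseyProp N (fun _ : Fin 2 => n + 1)}
  refine le_csInf ⟨N0, hN0⟩ ?_
  intro N hN
  by_contra hc
  push_neg at hc
  have hle : N ≤ (R - 1) + n := by omega
  set e : Fin N → Fin (R - 1) ⊕ Fin n := fun k => finSumFinEquiv.symm (Fin.castLE hle k)
    with he_def
  have he : Function.Injective e :=
    finSumFinEquiv.symm.injective.comp (Fin.castLE_injective hle)
  set c : Sym2 (Fin N) → Fin 2 := fun p => extCol (R - 1) n c0 (Sym2.map e p) with hc_def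
  have hN' : HasRamseyProp N (fun _ : Fin 2 => n + 1) := hN
  obtain ⟨i, s, hsc, hsm⟩ := hN' c
  refine extCol_no_mono c0 hc0' i (s.image e)
    (by rw [Finset.card_image_of_injective s he]; exact hsc) ?_
  intro x hx y hy hxy
  obtain ⟨u, hu, rfl⟩ := Finset.mem_image.mp hx
  obtain ⟨v, hv, rfl⟩ := Finset.mem_image.mp hy
  have huv : u ≠ v := fun h => hxy (by rw [h])
  have hcv := hsm u hu v hv huv
  rw [hc_def] at hcv
  simpa [Sym2.map_pair_eq] using hcv
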